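/- For every integer $k \geq 1$ one has $Z_k = t_k + \frac{(n+1)(-1)^k}{k!}\,\sigma^k - \frac{1}{k!}\, L^k$ in $R$. (This is formula (3.2) of Claim 3.1 in the proof of Proposition 1.1.) -/

import Mathlib

theorem aux_sigma_L {R : Type*} [CommRing R] [Algebra ℚ R]
    (σ L : R) (hσ : σ ^ 2 = -(σ * L)) (m : ℕ) :
    σ * L ^ m = ((-1 : ℚ) ^ m) • σ ^ (m + 1) := by
  induction m with
  | zero => simp
  | succ m ih =>
    have h1 : σ * L ^ (m+1) = (σ * L ^ m) * L := by ring
    have h3 : σ * L = -σ ^ 2 := by linear_combination hσ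
    rw [h1, ih, smul_mul_assoc]
    have h2 : σ ^ (m+1) * L = σ ^ m * (σ * L) := by ring
    rw [h2, h3]
    have h4 : σ ^ m * -σ ^ 2 = -σ ^ (m + 1 + 1) := by ring
    rw [h4]
    simp [pow_succ, mul_smul]

theorem aux_sigma_c {R : Type*} [CommRing R] [Algebra ℚ R]
    (σ L : R) (hσ : σ ^ 2 = -(σ * L)) (c : R) (hc : c = 2 * σ + L) (j : ℕ) :
    σ * c ^ j = σ ^ (j + 1) := by
  have hsc : σ * c = σ ^ 2 := by rw [hc]; linear_combination hσ
  induction j with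
  | zero => simp
  | succ j ih =>
    calc σ * c ^ (j+1) = (σ * c) * c ^ j := by ring
    _ = σ * (σ * c ^ j) := by rw [hsc]; ring
    _ = σ * σ ^ (j+1) := by rw [ih]
    _ = σ ^ (j+1+1) := by ring

theorem aux_ck {R : Type*} [CommRing R] [Algebra ℚ R]
    (σ L : R) (hσ : σ ^ 2 = -(σ * L)) (c : R) (hc : c = 2 * σ + L) (k : ℕ) :
    c ^ k = L ^ k + ((1 : ℚ) - (-1 : ℚ) ^ k) • σ ^ k := by
  have hc2 : c ^ 2 = L ^ 2 := by rw [hc]; linear_combination 4 * hσ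
  rcases Nat.even_or_odd k with ⟨m, hm⟩ | ⟨m, hm⟩
  · subst hm
    have : c ^ (m + m) = (c ^ 2) ^ m := by ring
    rw [this, hc2]
    have h1 : ((-1 : ℚ)) ^ (m + m) = 1 := by
      rw [← two_mul, pow_mul]; norm_num
    rw [h1]
    simp
    ring
  · subst hm
    have : c ^ (2*m + 1) = c * (c ^ 2) ^ m := by ring
    rw [this, hc2, hc]
    have h1 : (2 * σ + L) * (L ^ 2) ^ m = 2 * (σ * L ^ (2*m)) + L ^ (2*m+1) := by ring
    rw [h1, aux_sigma_L σ L hσ]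
    have h2 : ((-1:ℚ)) ^ (2*m) = 1 := by rw [pow_mul]; norm_num
    have h3 : ((-1:ℚ)) ^ (2*m+1) = -1 := by rw [pow_succ, h2]; norm_num
    rw [h2, h3, one_smul]
    have : (1:ℚ) - -1 = (2:ℚ) := by norm_num
    rw [this]
    rw [add_comm]
    congr 1
    rw [two_smul]
    ring

theorem aux_sum (k : ℕ) (hk : 1 ≤ k) :
    ∑ j ∈ Finset.range k, (-1 : ℚ) ^ (k - j) / (((k - j).factorial : ℚ) * (j.factorial : ℚ))
      = -((k.factorial : ℚ))⁻¹ := by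
  have hfull : ∑ j ∈ Finset.range (k + 1),
      (-1 : ℚ) ^ (k - j) / (((k - j).factorial : ℚ) * (j.factorial : ℚ)) = 0 := by
    have hb := add_pow (1 : ℚ) (-1) k
    have h0 : ((1 : ℚ) + -1) ^ k = 0 := by
      rw [add_neg_cancel]; exact zero_pow (by omega)
    rw [h0] at hb
    have : ∀ j ∈ Finset.range (k + 1),
        (-1 : ℚ) ^ (k - j) / (((k - j).factorial : ℚ) * (j.factorial : ℚ))
        = ((k.factorial : ℚ))⁻¹ * ((1:ℚ) ^ j * (-1) ^ (k - j) * (k.choose j : ℚ)) := by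
      intro j hj
      have hjk : j ≤ k := by simpa [Nat.lt_succ_iff] using Finset.mem_range.mp hj
      rw [Nat.cast_choose ℚ hjk]
      have h1 : ((j.factorial : ℚ)) ≠ 0 := Nat.cast_ne_zero.mpr j.factorial_ne_zero
      have h2 : (((k - j).factorial : ℚ)) ≠ 0 := Nat.cast_ne_zero.mpr (k - j).factorial_ne_zero
      have h3 : ((k.factorial : ℚ)) ≠ 0 := Nat.cast_ne_zero.mpr k.factorial_ne_zero
      field_simp
      ring
    rw [Finset.sum_congr rfl this, ← Finset.mul_sum, ← hb]
    simp
  have hsplit := Finset.sum_range_succ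
    (fun j => (-1 : ℚ) ^ (k - j) / (((k - j).factorial : ℚ) * (j.factorial : ℚ))) k
  rw [hsplit] at hfull
  simp only [Nat.sub_self, pow_zero, Nat.factorial_zero, Nat.cast_one, one_mul] at hfull
  rw [one_div] at hfull; linarith

/-- Formula (3.2) of Claim 3.1:
`Z_k = t_k + ((n+1)(-1)^k / k!) σ^k - (1/k!) L^k` for `k ≥ 1`. -/
theorem stmt_3 {R : Type*} [CommRing R] [Algebra ℚ R]
    (σ L : R) (hσ : σ ^ 2 = -(σ * L))
    (n : ℕ) (t : ℕ → R) (ht0 : t 0 = (n : R)) (ht : ∀ j, 1 ≤ j → σ * t j = 0)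
    (c : R) (hc : c = 2 * σ + L)
    (Z : ℕ → R)
    (hZ : ∀ k : ℕ, Z k = ∑ j ∈ Finset.range (k + 1),
      (((-1 : ℚ) ^ (k - j) / (k - j).factorial) •
        ((t j - ((j.factorial : ℚ)⁻¹ • c ^ j)) * σ ^ (k - j))))
    (k : ℕ) (hk : 1 ≤ k) :
    Z k = t k + ((((n : ℚ) + 1) * (-1) ^ k / k.factorial) • σ ^ k)
      - ((k.factorial : ℚ)⁻¹ • L ^ k) := by
  rw [hZ k, Finset.sum_range_succ]
  -- the last term (j = k)
  have hlast : ((-1 : ℚ) ^ (k - k) / (k - k).factorial) •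
      ((t k - ((k.factorial : ℚ)⁻¹ • c ^ k)) * σ ^ (k - k))
      = t k - (k.factorial : ℚ)⁻¹ • c ^ k := by
    simp [Nat.sub_self]
  rw [hlast]
  -- rewrite each term with j < k
  have key : ∀ j ∈ Finset.range k,
      ((-1 : ℚ) ^ (k - j) / (k - j).factorial) •
        ((t j - ((j.factorial : ℚ)⁻¹ • c ^ j)) * σ ^ (k - j))
      = ((if j = 0 then ((-1:ℚ)^k * n / k.factorial) else 0)
          - (-1:ℚ)^(k-j) / (((k-j).factorial : ℚ) * (j.factorial : ℚ))) • σ ^ k := by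
    intro j hj
    have hjk : j < k := Finset.mem_range.mp hj
    have hm : k - j = (k - j - 1) + 1 := by omega
    have hcσ : c ^ j * σ ^ (k - j) = σ ^ k := by
      rw [hm, pow_succ]
      calc c ^ j * (σ ^ (k - j - 1) * σ) = σ ^ (k - j - 1) * (σ * c ^ j) := by ring
      _ = σ ^ (k - j - 1) * σ ^ (j + 1) := by rw [aux_sigma_c σ L hσ c hc]
      _ = σ ^ (k - j - 1 + (j + 1)) := by rw [← pow_add]
      _ = σ ^ k := by congr 1; omega
    have htσ : t j * σ ^ (k - j) = (if j = 0 then ((n:ℚ)) else 0) • σ ^ k := by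
      rcases Nat.eq_zero_or_pos j with h0 | h0
      · subst h0
        rw [ht0, if_pos rfl]
        have : k - 0 = k := by omega
        rw [this, Algebra.smul_def]
        congr 1
        simp
      · rw [if_neg (by omega), zero_smul, hm, pow_succ]
        calc t j * (σ ^ (k - j - 1) * σ) = σ ^ (k - j - 1) * (σ * t j) := by ring
        _ = σ ^ (k - j - 1) * 0 := by rw [ht j h0]
        _ = 0 := by ring
    rw [sub_mul, smul_mul_assoc, hcσ, htσ, smul_sub, smul_smul, smul_smul]
    rw [← sub_smul]
    congr 1
    rcases Nat.eq_zero_or_pos j with h0 | h0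
    · subst h0
      simp only [if_pos rfl]
      have : k - 0 = k := by omega
      rw [this]
      simp [Nat.factorial_zero]
      ring
    · rw [if_neg (by omega), if_neg (by omega)]
      field_simp
      ring
  rw [Finset.sum_congr rfl key, ← Finset.sum_smul]
  rw [Finset.sum_sub_distrib, aux_sum k hk]
  rw [Finset.sum_ite_eq' (Finset.range k) 0 (fun _ => ((-1:ℚ)^k * n / k.factorial))]
  rw [if_pos (Finset.mem_range.mpr (by omega))]
  rw [aux_ck σ L hσ c hc]
  match_scalars <;> ring
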